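/- Let g = x^{-m} a(x) ∈ ℂ[x, x^{-1}] with m ≥ 1 and a(x) ∈ ℂ[x] not divisible by x. Then ℂ[x][g] = ℂ[x, x^{-1}] if and only if a(x)ℂ[x] + x^m ℂ[x] = ℂ[x]. -/

import Mathlib

open Polynomial LaurentPolynomial

/-- For `g = x^{-m} a(x)` in the Laurent polynomial ring `ℂ[x,x⁻¹]`,
with `m ≥ 1` and `x ∤ a`, the `ℂ[x]`-subalgebra generated by `g` is the whole
Laurent polynomial ring iff `aℂ[x] + x^m ℂ[x] = ℂ[x]`. -/
theorem stmt0 (m : ℕ) (hm : 1 ≤ m) (a : Polynomial ℂ) (ha : ¬ (Polynomial.X ∣ a)) :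
    Algebra.adjoin (Polynomial ℂ)
        ({T (-(m : ℤ)) * a.toLaurent} : Set (LaurentPolynomial ℂ)) = ⊤ ↔
      Ideal.span ({a, Polynomial.X ^ m} : Set (Polynomial ℂ)) = ⊤ := by
  have hcop : IsCoprime a ((Polynomial.X : Polynomial ℂ) ^ m) :=
    ((Polynomial.irreducible_X.coprime_iff_not_dvd.2 ha).symm.pow_right)
  obtain ⟨u, v, huv⟩ := hcop
  constructor
  · intro _
    rw [Ideal.eq_top_iff_one]
    exact Ideal.mem_span_pair.2 ⟨u, v, huv⟩
  · intro _
    set A := Algebra.adjoin (Polynomial ℂ)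
        ({T (-(m : ℤ)) * a.toLaurent} : Set (LaurentPolynomial ℂ)) with hA
    have hg : T (-(m : ℤ)) * a.toLaurent ∈ A := Algebra.subset_adjoin rfl
    have htl : ∀ p : Polynomial ℂ, p.toLaurent ∈ A := fun p => by
      simpa using A.algebraMap_mem p
    have hTm : T (-(m : ℤ)) ∈ A := by
      have : T (-(m : ℤ)) = u.toLaurent * (T (-(m : ℤ)) * a.toLaurent) + v.toLaurent := by
        have h1 : (u * a + v * Polynomial.X ^ m).toLaurent = (1 : LaurentPolynomial ℂ) := by
          rw [huv]; simp
        calc T (-(m : ℤ)) = T (-(m : ℤ)) * (u * a + v * Polynomial.X ^ m).toLaurent := by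
              rw [h1, mul_one]
          _ = u.toLaurent * (T (-(m : ℤ)) * a.toLaurent)
                + v.toLaurent * (T (-(m : ℤ)) * T (m : ℤ)) := by
              simp only [map_add, map_mul, Polynomial.toLaurent_X_pow]; ring
          _ = u.toLaurent * (T (-(m : ℤ)) * a.toLaurent) + v.toLaurent := by
              rw [← T_add]; simp
      rw [this]
      exact A.add_mem (A.mul_mem (htl u) hg) (htl v)
    have hT1 : T (-1 : ℤ) ∈ A := by
      have : T (-1 : ℤ) = ((Polynomial.X : Polynomial ℂ) ^ (m - 1)).toLaurent * T (-(m : ℤ)) := by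
        rw [Polynomial.toLaurent_X_pow, ← T_add]
        congr 1
        omega
      rw [this]
      exact A.mul_mem (htl _) hTm
    rw [eq_top_iff]
    intro f hf
    clear hf
    induction f using LaurentPolynomial.induction_on_mul_T with
    | mul_T =>
      rename_i f n
      have hTn : T (-(n : ℤ)) ∈ A := by
        have : T (-(n : ℤ)) = (T (-1 : ℤ) : LaurentPolynomial ℂ) ^ n := by
          rw [T_pow]; congr 1; omega
        rw [this]
        exact A.pow_mem hT1 n
      exact A.mul_mem (htl f) hTn
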